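/- The sets Σ(F_q) and S(F_q) have the same cardinality, namely |Σ(F_q)| = |S(F_q)| = (q² − 8q + 15)/4. -/

import Mathlib

open scoped Classical

noncomputable section

/-- The operation of the quasigroup `Q_{a,b}`:
`u*v = u + a(v-u)` if `v-u` is a square, `u*v = u + b(v-u)` otherwise. -/
def qop {F : Type*} [Field F] (a b u v : F) : F :=
  if IsSquare (v - u) then u + a * (v - u) else u + b * (v - u)

/-- The set `Σ(F)` of pairs `(a,b)` with `a ≠ b`, `a,b ∉ {0,1}`, and
`ab` and `(1-a)(1-b)` both squares. -/
def SigSet (F : Type*) [Field F] : Set (F × F) :=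
  {p | p.1 ≠ p.2 ∧ p.1 ≠ 0 ∧ p.1 ≠ 1 ∧ p.2 ≠ 0 ∧ p.2 ≠ 1 ∧
    IsSquare (p.1 * p.2) ∧ IsSquare ((1 - p.1) * (1 - p.2))}

/-- `Q_{a,b}` is maximally nonassociative. -/
def MaxNA {F : Type*} [Field F] (a b : F) : Prop :=
  ∀ u v w : F, qop a b (qop a b u v) w = qop a b u (qop a b v w) → u = v ∧ v = w

/-- `σ(q)`: the number of pairs `(a,b) ∈ Σ` for which `Q_{a,b}` is
maximally nonassociative. -/
def sigmaCount (F : Type*) [Field F] : ℕ :=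
  Set.ncard {p : F × F | p ∈ SigSet F ∧ MaxNA p.1 p.2}

/-- The set `S(F)` of pairs `(x,y)` of squares with `x ≠ y`, `x,y ∉ {0,1}`. -/
def SPairs (F : Type*) [Field F] : Set (F × F) :=
  {p | IsSquare p.1 ∧ IsSquare p.2 ∧ p.1 ≠ p.2 ∧ p.1 ≠ 0 ∧ p.1 ≠ 1 ∧ p.2 ≠ 0 ∧ p.2 ≠ 1}

/-- The map `Ψ : Σ → S`, `(a,b) ↦ (a/b, (1-a)/(1-b))`. -/
def PsiMap {F : Type*} [Field F] (p : F × F) : F × F :=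
  (p.1 / p.2, (1 - p.1) / (1 - p.2))


-- counting squares
lemma two_mul_card_sq (F : Type*) [Field F] [Fintype F] (h2 : ringChar F ≠ 2) :
    2 * (Finset.univ.filter (fun a : F => IsSquare a)).card = Fintype.card F + 1 := by
  classical
  set S := Finset.univ.filter (fun a : F => IsSquare a) with hS
  have himg : (Finset.univ : Finset F).image (fun x => x * x) = S := by
    ext a
    simp only [hS, Finset.mem_image, Finset.mem_univ, true_and, Finset.mem_filter]
    exact ⟨fun ⟨x, hx⟩ => ⟨x, hx.symm⟩, fun ⟨r, hr⟩ => ⟨r, hr.symm⟩⟩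
  have hcard := Finset.card_eq_sum_card_image (fun x : F => x * x) Finset.univ
  rw [himg] at hcard
  have h0S : (0 : F) ∈ S := by simp [hS]
  have hfib : ∀ a ∈ S.erase 0,
      (Finset.univ.filter (fun x : F => x * x = a)).card = 2 := by
    intro a ha
    obtain ⟨ha0, haS⟩ := Finset.mem_erase.mp ha
    obtain ⟨b, hb⟩ := (Finset.mem_filter.mp haS).2
    have hb0 : b ≠ 0 := by rintro rfl; simp at hb; exact ha0 hb
    have : Finset.univ.filter (fun x : F => x * x = a) = {b, -b} := by
      ext x
      simp only [Finset.mem_filter, Finset.mem_univ, true_and, Finset.mem_insert,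
        Finset.mem_singleton, hb]
      constructor
      · intro h; rcases mul_self_eq_mul_self_iff.mp h with h | h
        · exact Or.inl h
        · exact Or.inr h
      · rintro (rfl | rfl) <;> ring
    rw [this]
    rw [Finset.card_insert_of_notMem, Finset.card_singleton]
    simp only [Finset.mem_singleton]
    intro h
    exact hb0 ((Ring.eq_self_iff_eq_zero_of_char_ne_two h2).mp h.symm)
  have hfib0 : (Finset.univ.filter (fun x : F => x * x = (0:F))).card = 1 := by
    have : Finset.univ.filter (fun x : F => x * x = (0:F)) = {0} := by
      ext x; simp [mul_self_eq_zero]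
    rw [this, Finset.card_singleton]
  rw [← Finset.add_sum_erase _ _ h0S, hfib0, Finset.sum_congr rfl hfib,
    Finset.sum_const, smul_eq_mul, Finset.card_erase_of_mem h0S] at hcard
  have hpos : 1 ≤ S.card := Finset.card_pos.mpr ⟨0, h0S⟩
  have : Finset.univ.card = Fintype.card F := rfl
  omega

lemma psi_bijOn (F : Type*) [Field F] :
    Set.BijOn PsiMap (SigSet F) (SPairs F) := by
  refine ⟨?_, ?_, ?_⟩
  · rintro ⟨a, b⟩ ⟨hab, ha0, ha1, hb0, hb1, hsq1, hsq2⟩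
    dsimp only at hab ha0 ha1 hb0 hb1 hsq1 hsq2
    simp only [SPairs, PsiMap, Set.mem_setOf_eq]
    have hb1' : (1 : F) - b ≠ 0 := sub_ne_zero.mpr (Ne.symm hb1)
    have ha1' : (1 : F) - a ≠ 0 := sub_ne_zero.mpr (Ne.symm ha1)
    refine ⟨?_, ?_, ?_, ?_, ?_, ?_, ?_⟩
    · have h : a / b = a * b * b⁻¹ ^ 2 := by field_simp
      rw [h]; exact hsq1.mul (IsSquare.sq _)
    · have h : (1 - a) / (1 - b) = (1 - a) * (1 - b) * ((1 - b)⁻¹) ^ 2 := by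
        field_simp
      rw [h]; exact hsq2.mul (IsSquare.sq _)
    · intro h
      field_simp at h
      exact hab (by linear_combination h)
    · exact div_ne_zero ha0 hb0
    · intro h
      exact hab ((div_eq_one_iff_eq hb0).mp h)
    · exact div_ne_zero ha1' hb1'
    · intro h
      have h2 := (div_eq_one_iff_eq hb1').mp h
      exact hab (by linear_combination -h2)
  · rintro ⟨a1, b1⟩ ⟨hab1, ha10, ha11, hb10, hb11, hq1, hq2⟩
      ⟨a2, b2⟩ ⟨hab2, ha20, ha21, hb20, hb21, hq3, hq4⟩ heq
    dsimp only at hab1 ha10 ha11 hb10 hb11 hab2 ha20 ha21 hb20 hb21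
    simp only [PsiMap, Prod.mk.injEq] at heq
    obtain ⟨h1, h2⟩ := heq
    have hb11' : (1 : F) - b1 ≠ 0 := sub_ne_zero.mpr (Ne.symm hb11)
    have hb21' : (1 : F) - b2 ≠ 0 := sub_ne_zero.mpr (Ne.symm hb21)
    rw [div_eq_div_iff hb10 hb20] at h1
    rw [div_eq_div_iff hb11' hb21'] at h2
    have hd : a1 - b1 = a2 - b2 := by linear_combination h1 - h2
    have hbb : b1 = b2 := by
      have hd0 : a1 - b1 ≠ 0 := sub_ne_zero.mpr hab1
      have hkey : (a1 - b1) * b2 = (a1 - b1) * b1 := by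
        linear_combination h1 - b1 * hd
      exact (mul_left_cancel₀ hd0 hkey).symm
    have haa : a1 = a2 := by
      rw [hbb] at hd; linear_combination hd
    exact Prod.ext haa hbb
  · rintro ⟨x, y⟩ ⟨hsx, hsy, hxy, hx0, hx1, hy0, hy1⟩
    dsimp only at hsx hsy hxy hx0 hx1 hy0 hy1
    have hxy' : x - y ≠ 0 := sub_ne_zero.mpr hxy
    have hy1' : (1 : F) - y ≠ 0 := sub_ne_zero.mpr (Ne.symm hy1)
    have hx1' : x - 1 ≠ 0 := sub_ne_zero.mpr hx1
    set b : F := (1 - y) / (x - y) with hbdef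
    set a : F := x * b with hadef
    have hb0 : b ≠ 0 := div_ne_zero hy1' hxy'
    have hb1 : b ≠ 1 := by
      intro h
      rw [hbdef, div_eq_one_iff_eq hxy'] at h
      exact hx1 (by linear_combination -h)
    have ha0 : a ≠ 0 := mul_ne_zero hx0 hb0
    have hab : a ≠ b := by
      intro h
      rw [hadef] at h
      have hx : x * b = 1 * b := by rw [one_mul]; exact h
      exact hx1 (mul_right_cancel₀ hb0 hx)
    have ha1 : a ≠ 1 := by
      intro h
      rw [hadef, hbdef] at h
      field_simp at h
      -- h : x * (1 - y) = x - y  (up to arrangement)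
      have hz : y * (x - 1) = 0 := by linear_combination -h
      rcases mul_eq_zero.mp hz with h' | h'
      · exact hy0 h'
      · exact hx1' h'
    have hb1' : (1 : F) - b ≠ 0 := sub_ne_zero.mpr (Ne.symm hb1)
    refine ⟨(a, b), ⟨hab, ha0, ha1, hb0, hb1, ?_, ?_⟩, ?_⟩
    · have h : a * b = x * b ^ 2 := by rw [hadef]; ring
      rw [h]; exact hsx.mul (IsSquare.sq _)
    · have h1b : (1 : F) - b = (x - 1) / (x - y) := by
        rw [hbdef]; field_simp; ring
      have h1a : (1 : F) - a = y * (x - 1) / (x - y) := by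
        rw [hadef, hbdef]; field_simp; ring
      have h : (1 - a) * (1 - b) = y * ((x - 1) / (x - y)) ^ 2 := by
        rw [h1a, h1b]; field_simp
      rw [h]; exact hsy.mul (IsSquare.sq _)
    · simp only [PsiMap, Prod.mk.injEq]
      constructor
      · rw [hadef, mul_div_assoc, div_self hb0, mul_one]
      · rw [hadef, hbdef]
        field_simp
        have h' : x - y - (1 - y) ≠ 0 := by rw [show x - y - (1 - y) = x - 1 by ring]; exact hx1'
        rw [div_eq_iff h']
        ring

/-- Corollary 1.3: `|Σ(F_q)| = |S(F_q)| = (q² - 8q + 15)/4`. -/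
theorem card_SigSet_SSet (F : Type*) [Field F] [Fintype F] (q : ℕ)
    (hq : Fintype.card F = q) (hodd : Odd q) :
    (Set.ncard (SigSet F) : ℤ) = ((q : ℤ) ^ 2 - 8 * q + 15) / 4 ∧
      (Set.ncard (SPairs F) : ℤ) = ((q : ℤ) ^ 2 - 8 * q + 15) / 4 := by
  classical
  have hchar : ringChar F ≠ 2 := by
    intro h
    have h2 := FiniteField.even_card_of_char_two h
    rw [hq] at h2
    obtain ⟨k, hk⟩ := hodd
    omega
  have hsq := two_mul_card_sq F hchar
  rw [hq] at hsq
  set Sq := Finset.univ.filter (fun a : F => IsSquare a) with hSqdef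
  set T := Finset.univ.filter (fun x : F => IsSquare x ∧ x ≠ 0 ∧ x ≠ 1) with hTdef
  have h0Sq : (0 : F) ∈ Sq := by simp [hSqdef]
  have h1Sq : (1 : F) ∈ Sq := by simp [hSqdef]
  have hT : T = (Sq.erase 1).erase 0 := by
    ext x
    simp only [hTdef, hSqdef, Finset.mem_erase, Finset.mem_filter, Finset.mem_univ, true_and]
    tauto
  have hTcard : T.card + 2 = Sq.card := by
    rw [hT, Finset.card_erase_of_mem, Finset.card_erase_of_mem h1Sq]
    · have : 1 ≤ Sq.card := Finset.card_pos.mpr ⟨0, h0Sq⟩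
      have h1 : (1:F) ∈ Sq := h1Sq
      have : 2 ≤ Sq.card := by
        refine Finset.one_lt_card.mpr ⟨0, h0Sq, 1, h1Sq, ?_⟩
        exact zero_ne_one
      omega
    · exact Finset.mem_erase.mpr ⟨zero_ne_one, h0Sq⟩
  have hq3 : 3 ≤ q := by
    have h2 : 1 < Fintype.card F := Fintype.one_lt_card
    obtain ⟨k, hk⟩ := hodd
    omega
  set m := T.card with hmdef
  have hqm : q = 2 * m + 3 := by omega
  have hSP : SPairs F = ↑(T.offDiag) := by
    ext ⟨x, y⟩
    simp only [SPairs, Set.mem_setOf_eq, Finset.mem_coe, Finset.mem_offDiag, hTdef,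
      Finset.mem_filter, Finset.mem_univ, true_and]
    tauto
  have hSPcard : Set.ncard (SPairs F) = m * m - m := by
    rw [hSP, Set.ncard_coe_finset, Finset.offDiag_card]
  have hle : m ≤ m * m := by nlinarith
  have hqZ : (q : ℤ) = 2 * (m : ℤ) + 3 := by exact_mod_cast congrArg (Nat.cast : ℕ → ℤ) hqm
  have hval : ((m * m - m : ℕ) : ℤ) = ((q : ℤ) ^ 2 - 8 * q + 15) / 4 := by
    rw [Nat.cast_sub hle, hqZ]
    push_cast
    have h4 : (2 * (m:ℤ) + 3) ^ 2 - 8 * (2 * (m:ℤ) + 3) + 15 = 4 * ((m:ℤ) * m - m) := by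
      ring
    rw [h4, Int.mul_ediv_cancel_left _ (by norm_num)]
  have hSig : Set.ncard (SigSet F) = Set.ncard (SPairs F) := by
    have h := Set.ncard_image_of_injOn (psi_bijOn F).injOn
    rw [(psi_bijOn F).image_eq] at h
    exact h.symm
  refine ⟨?_, ?_⟩
  · rw [hSig, hSPcard]; exact hval
  · rw [hSPcard]; exact hval
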